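/- Lyapunov decrease identity for the gradient observer (core of Theorem 1): let h : ℝ³∖{0} → ℝ be twice continuously differentiable and 0-homogeneous, and let k > 0. Let E : ℝ → SL(3,ℝ) be differentiable and satisfy E′(t) = Δ(t) E(t), where the correction term is Δ(t) := k ∫_{S²} ( h(E(t)⁻¹x) − h(x) ) · ( E(t)⁻ᵀ ∇h(E(t)⁻¹x) ) xᵀ dσ(x) ∈ ℝ^{3×3}. Then the Lyapunov function L(t) := ½ ∫_{S²} ( h(E(t)⁻¹x) − h(x) )² dσ(x) is differentiable with L′(t) = −(1/k) ‖Δ(t)‖² ≤ 0 for all t, where ‖·‖ is the Frobenius norm. -/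

import Mathlib

open Matrix MeasureTheory
open scoped RealInnerProductSpace

noncomputable section

/-- Euclidean 3-space. -/
abbrev E3 := EuclideanSpace ℝ (Fin 3)
/-- Real 3×3 matrices. -/
abbrev M3 := Matrix (Fin 3) (Fin 3) ℝ
/-- The special linear group SL(3,ℝ). -/
abbrev SL3 := Matrix.SpecialLinearGroup (Fin 3) ℝ

/-- Matrix-vector product as a map on Euclidean 3-space. -/
def mopv (A : M3) (x : E3) : E3 :=
  (WithLp.equiv 2 (Fin 3 → ℝ)).symm (A.mulVec (WithLp.equiv 2 (Fin 3 → ℝ) x))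

lemma mopv_mopv (A B : M3) (x : E3) : mopv A (mopv B x) = mopv (A * B) x := by
  simp [mopv, Matrix.mulVec_mulVec]

lemma mopv_one (x : E3) : mopv 1 x = x := by simp [mopv]

lemma mopv_ne_zero (H : SL3) {x : E3} (hx : x ≠ 0) : mopv (↑H) x ≠ 0 := by
  intro h0
  apply hx
  have h1 : mopv ↑(H⁻¹) (mopv ↑H x) = x := by
    rw [mopv_mopv, ← Matrix.SpecialLinearGroup.coe_mul, inv_mul_cancel,
      Matrix.SpecialLinearGroup.coe_one, mopv_one]
  rw [h0] at h1
  simpa [mopv] using h1.symm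

/-- The unit sphere S² in Euclidean 3-space. -/
abbrev S2 : Set E3 := Metric.sphere (0 : E3) 1

lemma sphere_ne_zero {x : E3} (hx : x ∈ S2) : x ≠ 0 := by
  have h : ‖x‖ = 1 := mem_sphere_zero_iff_norm.mp hx
  intro h0; rw [h0] at h; simp at h

/-- The right action `ρ(H,x) = H⁻¹x/‖H⁻¹x‖` of SL(3,ℝ) on the unit sphere. -/
def ρS (H : SL3) (x : S2) : S2 :=
  ⟨‖mopv ↑(H⁻¹) ↑x‖⁻¹ • mopv ↑(H⁻¹) ↑x,
    mem_sphere_zero_iff_norm.mpr (norm_smul_inv_norm (mopv_ne_zero H⁻¹ (sphere_ne_zero x.2)))⟩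

/-- The standard surface measure on the unit sphere S² (total mass 4π). -/
def σ : Measure S2 := (volume : Measure E3).toSphere

/-- The Frobenius norm of a 3×3 real matrix, `‖A‖ = √tr(AᵀA)`. -/
def frobNorm (A : M3) : ℝ := Real.sqrt (∑ i, ∑ j, A i j ^ 2)

/-! ### Auxiliary lemmas -/

lemma mopv_apply' (A : M3) (x : E3) (i : Fin 3) : mopv A x i = ∑ j, A i j * x j := rfl

lemma inner_formula' (a b : E3) : ⟪a, b⟫ = ∑ i, a i * b i := by
  simp [PiLp.inner_apply, RCLike.inner_apply]
  exact Finset.sum_congr rfl fun i _ => mul_comm _ _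

lemma mopv_cont' (A : M3) : Continuous (mopv A) := by
  have : mopv A = fun x => Matrix.toEuclideanLin A x := by funext x; rfl
  rw [this]
  exact (Matrix.toEuclideanLin A).continuous_of_finiteDimensional

lemma coord_le_norm' (v : E3) (i : Fin 3) : |v i| ≤ ‖v‖ := by
  rw [EuclideanSpace.norm_eq]
  have h0 : |v i| = Real.sqrt (‖v i‖ ^ 2) := by
    rw [Real.sqrt_sq (norm_nonneg _), Real.norm_eq_abs]
  rw [h0]
  apply Real.sqrt_le_sqrt
  exact Finset.single_le_sum (f := fun j => ‖v j‖ ^ 2) (fun j _ => sq_nonneg _) (Finset.mem_univ i)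

lemma norm_le_sum_abs' (v : E3) : ‖v‖ ≤ ∑ i, |v i| := by
  rw [EuclideanSpace.norm_eq]
  have h1 : ∑ i, ‖v i‖ ^ 2 ≤ (∑ i, |v i|) ^ 2 := by
    calc ∑ i, ‖v i‖ ^ 2 = ∑ i, |v i| * |v i| := by simp [Real.norm_eq_abs, sq]
      _ ≤ ∑ i, |v i| * (∑ j, |v j|) :=
          Finset.sum_le_sum fun i _ => mul_le_mul_of_nonneg_left
            (Finset.single_le_sum (fun j _ => abs_nonneg (v j)) (Finset.mem_univ i))
            (abs_nonneg _)
      _ = (∑ i, |v i|) ^ 2 := by rw [← Finset.sum_mul, sq]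
  calc Real.sqrt (∑ i, ‖v i‖ ^ 2) ≤ Real.sqrt ((∑ i, |v i|) ^ 2) := Real.sqrt_le_sqrt h1
    _ = abs (∑ i, |v i|) := Real.sqrt_sq_eq_abs _
    _ = ∑ i, |v i| := abs_of_nonneg (Finset.sum_nonneg fun _ _ => abs_nonneg _)

lemma diffAt_det' {M : ℝ → M3} {t : ℝ}
    (hM : ∀ a b : Fin 3, DifferentiableAt ℝ (fun s => M s a b) t) :
    DifferentiableAt ℝ (fun s => (M s).det) t := by
  simp only [Matrix.det_apply, Units.smul_def, zsmul_eq_mul]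
  apply DifferentiableAt.fun_sum
  intro p _
  exact (differentiableAt_const _).mul (DifferentiableAt.fun_finsetProd fun i _ => hM _ _)

lemma diffAt_inv_entry' (E : ℝ → SL3) (t : ℝ)
    (hEd : ∀ a b : Fin 3, DifferentiableAt ℝ (fun s => ((E s : M3)) a b) t) (i j : Fin 3) :
    DifferentiableAt ℝ (fun s => ((↑((E s)⁻¹) : M3)) i j) t := by
  have hco : ∀ s, ((↑((E s)⁻¹) : M3)) i j
      = ((E s : M3).updateRow j (Pi.single i 1)).det := fun s => by
    rw [Matrix.SpecialLinearGroup.coe_inv, Matrix.adjugate_apply]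
  simp only [hco]
  apply diffAt_det'
  intro a b
  rcases eq_or_ne a j with rfl | hne
  · simp only [Matrix.updateRow_self]
    exact differentiableAt_const _
  · simp only [Matrix.updateRow_ne hne]
    exact hEd a b

lemma hasDerivAt_inv_entry' (E : ℝ → SL3) (Δ : ℝ → M3)
    (hE : ∀ (t : ℝ) (i j : Fin 3),
      HasDerivAt (fun s => ((E s : M3)) i j) ((Δ t * (E t : M3)) i j) t)
    (t : ℝ) (i j : Fin 3) :
    HasDerivAt (fun s => ((↑((E s)⁻¹) : M3)) i j)
      ((-((↑((E t)⁻¹) : M3) * Δ t)) i j) t := by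
  set N : ℝ → M3 := fun s => (↑((E s)⁻¹) : M3) with hN
  have hdiff : ∀ a b : Fin 3, DifferentiableAt ℝ (fun s => N s a b) t :=
    fun a b => diffAt_inv_entry' E t (fun a b => (hE t a b).differentiableAt) a b
  set D : M3 := fun a b => deriv (fun s => N s a b) t with hDdef
  have hD : ∀ a b : Fin 3, HasDerivAt (fun s => N s a b) (D a b) t :=
    fun a b => (hdiff a b).hasDerivAt
  have hNE : ∀ s, N s * (E s : M3) = 1 := fun s => by
    rw [hN]
    rw [show ((↑((E s)⁻¹) : M3)) * ((E s : M3)) = (((E s)⁻¹ * E s : SL3) : M3) from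
      (Matrix.SpecialLinearGroup.coe_mul _ _).symm, inv_mul_cancel,
      Matrix.SpecialLinearGroup.coe_one]
  have hEN : (E t : M3) * N t = 1 := by
    rw [hN]
    rw [show ((E t : M3)) * ((↑((E t)⁻¹) : M3)) = (((E t) * (E t)⁻¹ : SL3) : M3) from
      (Matrix.SpecialLinearGroup.coe_mul _ _).symm, mul_inv_cancel,
      Matrix.SpecialLinearGroup.coe_one]
  have key : D * (E t : M3) + N t * (Δ t * (E t : M3)) = 0 := by
    ext a b
    have h1 : HasDerivAt (fun s => ∑ l, N s a l * (E s : M3) l b)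
        (∑ l, (D a l * (E t : M3) l b + N t a l * (Δ t * (E t : M3)) l b)) t :=
      HasDerivAt.fun_sum fun l _ => (hD a l).mul (hE t l b)
    have h2 : (fun s => ∑ l, N s a l * (E s : M3) l b) = fun _ => (1 : M3) a b := by
      funext s
      rw [← Matrix.mul_apply, hNE s]
    rw [h2] at h1
    have h3 := (hasDerivAt_const t ((1 : M3) a b)).unique h1
    simp only [Matrix.add_apply, Matrix.mul_apply, Matrix.zero_apply]
    rw [Finset.sum_add_distrib] at h3
    rw [← h3.symm]
    congr 1
  have hDeq : D = -(N t * Δ t) := by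
    have h4 : D * ((E t : M3) * N t) = -(N t * (Δ t * (E t : M3))) * N t := by
      rw [← Matrix.mul_assoc]
      rw [eq_neg_of_add_eq_zero_left key]
    rw [hEN, mul_one] at h4
    rw [h4]
    simp [Matrix.mul_assoc, hEN]
  have := hD i j
  rwa [hDeq] at this

lemma cont_joint' (N : ℝ → M3) (hN : ∀ i j, Continuous fun s => N s i j) :
    Continuous fun p : ℝ × E3 => mopv (N p.1) p.2 := by
  have hw : Continuous fun p : ℝ × E3 => (fun i => ∑ j, N p.1 i j * p.2 j : Fin 3 → ℝ) := by
    apply continuous_pi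
    intro i
    apply continuous_finset_sum
    intro j _
    exact ((hN i j).comp continuous_fst).mul
      ((continuous_apply j).comp ((PiLp.continuousLinearEquiv 2 ℝ
        (fun _ : Fin 3 => ℝ)).continuous.comp continuous_snd))
  exact ((PiLp.continuousLinearEquiv 2 ℝ (fun _ : Fin 3 => ℝ)).symm.continuous.comp hw :)

lemma hasDerivAt_mopv' (N : ℝ → M3) (D : M3) (s : ℝ)
    (hN : ∀ i j, HasDerivAt (fun r => N r i j) (D i j) s) (x : E3) :
    HasDerivAt (fun r => mopv (N r) x) (mopv D x) s := by
  have hpi : HasDerivAt (fun r => (fun i => ∑ j, N r i j * x j : Fin 3 → ℝ))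
      (fun i => ∑ j, D i j * x j) s := by
    rw [hasDerivAt_pi]
    intro i
    exact HasDerivAt.fun_sum fun j _ => (hN i j).mul_const (x j)
  exact (((PiLp.continuousLinearEquiv 2 ℝ (fun _ : Fin 3 => ℝ)).symm :
    (Fin 3 → ℝ) →L[ℝ] E3).hasFDerivAt.comp_hasDerivAt s hpi :)


/-- Lyapunov decrease identity for the gradient observer: if
`E′ = ΔE` with correction `Δ(t) = k∫(h(E⁻¹x) − h(x))(E⁻ᵀ∇h(E⁻¹x))xᵀ dσ`, then
`L(t) = ½∫(h(E⁻¹x) − h(x))² dσ` satisfies `L′(t) = −(1/k)‖Δ(t)‖² ≤ 0`. -/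
theorem lyapunov_decrease (h : E3 → ℝ)
    (hreg : ContDiffOn ℝ 2 h {(0 : E3)}ᶜ)
    (hhom : ∀ c : ℝ, 0 < c → ∀ x : E3, x ≠ 0 → h (c • x) = h x)
    (k : ℝ) (hk : 0 < k) (E : ℝ → SL3) (Δ : ℝ → M3)
    (hΔ : ∀ (t : ℝ) (i j : Fin 3), Δ t i j =
      k * ∫ x : S2, (h (mopv ↑((E t)⁻¹) ↑x) - h ↑x) *
        ((mopv ((↑((E t)⁻¹) : M3)ᵀ) (gradient h (mopv ↑((E t)⁻¹) ↑x))) i *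
          (↑x : E3) j) ∂σ)
    (hE : ∀ (t : ℝ) (i j : Fin 3),
      HasDerivAt (fun s => ((E s : M3)) i j) ((Δ t * (E t : M3)) i j) t)
    (L : ℝ → ℝ)
    (hL : ∀ t : ℝ, L t = (1 / 2) * ∫ x : S2, (h (mopv ↑((E t)⁻¹) ↑x) - h ↑x) ^ 2 ∂σ) :
    ∀ t : ℝ, HasDerivAt L (-(1 / k) * frobNorm (Δ t) ^ 2) t ∧
      -(1 / k) * frobNorm (Δ t) ^ 2 ≤ 0 := by
  intro t
  haveI : IsFiniteMeasure σ := by unfold σ; infer_instance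
  classical
  -- the inverse matrix curve and its derivative
  have hNder : ∀ (s : ℝ) (i j : Fin 3), HasDerivAt (fun r => ((↑((E r)⁻¹) : M3)) i j)
      ((-((↑((E s)⁻¹) : M3) * Δ s)) i j) s := fun s => hasDerivAt_inv_entry' E Δ hE s
  have hNcont : ∀ i j : Fin 3, Continuous fun s => ((↑((E s)⁻¹) : M3)) i j := fun i j => by
    have : Differentiable ℝ fun s => ((↑((E s)⁻¹) : M3)) i j :=
      fun s => (hNder s i j).differentiableAt
    exact this.continuous
  -- differentiability and gradient facts for h
  have hdh : ∀ v : E3, v ≠ 0 → DifferentiableAt ℝ h v := fun v hv =>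
    ((hreg.differentiableOn (by norm_num)).differentiableAt
      ((isOpen_compl_singleton).mem_nhds hv))
  have hgradcont : ContinuousOn (gradient h) {(0 : E3)}ᶜ := by
    have hfd : ContinuousOn (fderiv ℝ h) {(0 : E3)}ᶜ :=
      hreg.continuousOn_fderiv_of_isOpen isOpen_compl_singleton (by norm_num)
    exact ((InnerProductSpace.toDual ℝ E3).symm.continuous.comp_continuousOn hfd :)
  have hu0 : ∀ (s : ℝ) (x : S2), mopv (↑((E s)⁻¹)) (↑x : E3) ≠ 0 := fun s x =>
    mopv_ne_zero (E s)⁻¹ (sphere_ne_zero x.2)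
  -- continuity in x of the various integrands
  have hcont_h : ∀ s : ℝ, Continuous fun x : S2 => h (mopv (↑((E s)⁻¹)) ↑x) := fun s => by
    apply hreg.continuousOn.comp_continuous
      ((mopv_cont' _).comp continuous_subtype_val)
    exact fun x => hu0 s x
  have hcont_hx : Continuous fun x : S2 => h ↑x := by
    apply hreg.continuousOn.comp_continuous continuous_subtype_val
    exact fun x => sphere_ne_zero x.2
  have hcont_grad : ∀ s : ℝ, Continuous fun x : S2 => gradient h (mopv (↑((E s)⁻¹)) ↑x) :=
    fun s => by
      apply hgradcont.comp_continuous ((mopv_cont' _).comp continuous_subtype_val)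
      exact fun x => hu0 s x
  have hcont_coord : ∀ j : Fin 3, Continuous fun x : S2 => (↑x : E3) j := fun j =>
    ((continuous_apply j).comp ((PiLp.continuousLinearEquiv 2 ℝ
      (fun _ : Fin 3 => ℝ)).continuous.comp continuous_subtype_val) :)
  have hcont_mT : ∀ (s : ℝ) (l : Fin 3), Continuous fun x : S2 =>
      (mopv ((↑((E s)⁻¹) : M3)ᵀ) (gradient h (mopv (↑((E s)⁻¹)) ↑x))) l := fun s l => by
    simp only [mopv_apply']
    apply continuous_finset_sum
    intro i _
    exact continuous_const.mul (((continuous_apply i).comp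
      ((PiLp.continuousLinearEquiv 2 ℝ (fun _ : Fin 3 => ℝ)).continuous.comp
        (hcont_grad s))) :)
  -- integrability of the correction integrands
  have hint : ∀ l j : Fin 3, Integrable (fun x : S2 =>
      (h (mopv (↑((E t)⁻¹)) ↑x) - h ↑x) *
        ((mopv ((↑((E t)⁻¹) : M3)ᵀ) (gradient h (mopv (↑((E t)⁻¹)) ↑x))) l *
          (↑x : E3) j)) σ := fun l j => by
    apply Continuous.integrable_of_hasCompactSupport
    · exact ((hcont_h t).sub hcont_hx).mul ((hcont_mT t l).mul (hcont_coord j))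
    · exact HasCompactSupport.of_compactSpace _
  -- derivative of the squared error, pointwise in x
  have hFd : ∀ (s : ℝ) (x : S2), HasDerivAt
      (fun r => (h (mopv (↑((E r)⁻¹)) ↑x) - h ↑x) ^ 2)
      (2 * (h (mopv (↑((E s)⁻¹)) ↑x) - h ↑x) *
        ⟪gradient h (mopv (↑((E s)⁻¹)) ↑x), mopv (-((↑((E s)⁻¹) : M3) * Δ s)) ↑x⟫) s := by
    intro s x
    have h1 : HasDerivAt (fun r => mopv (↑((E r)⁻¹)) (↑x : E3))
        (mopv (-((↑((E s)⁻¹) : M3) * Δ s)) ↑x) s :=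
      hasDerivAt_mopv' (fun r => (↑((E r)⁻¹) : M3)) _ s (fun i j => hNder s i j) _
    have h2 : HasDerivAt (fun r => h (mopv (↑((E r)⁻¹)) (↑x : E3)))
        (⟪gradient h (mopv (↑((E s)⁻¹)) ↑x), mopv (-((↑((E s)⁻¹) : M3) * Δ s)) ↑x⟫) s := by
      have h4 : HasFDerivAt h (InnerProductSpace.toDual ℝ E3
          (gradient h (mopv (↑((E s)⁻¹)) ↑x))) (mopv (↑((E s)⁻¹)) ↑x) :=
        hasGradientAt_iff_hasFDerivAt.mp (hdh _ (hu0 s x)).hasGradientAt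
      have h5 := h4.comp_hasDerivAt s h1
      simpa [InnerProductSpace.toDual_apply_apply, Function.comp_def] using h5
    have h6 := (h2.sub_const (h ↑x)).fun_pow 2
    refine h6.congr_deriv ?_
    push_cast
    ring
  -- compactness bounds
  set T : Set ℝ := Set.Icc (t - 1) (t + 1) with hTdef
  have hball : Metric.ball t 1 ⊆ T := by
    intro s hs
    rw [Real.ball_eq_Ioo] at hs
    exact Set.Ioo_subset_Icc_self hs
  have htT : t ∈ T := by
    constructor <;> simp [hTdef] <;> linarith
  have hjoint : Continuous fun p : ℝ × E3 => mopv (↑((E p.1)⁻¹)) p.2 :=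
    cont_joint' (fun s => (↑((E s)⁻¹) : M3)) hNcont
  set K : Set E3 := (fun p : ℝ × E3 => mopv (↑((E p.1)⁻¹)) p.2) '' (T ×ˢ S2) with hKdef
  have hKc : IsCompact K := ((isCompact_Icc).prod (isCompact_sphere 0 1)).image hjoint
  have hKsub : K ⊆ {(0 : E3)}ᶜ := by
    rintro v ⟨⟨s, y⟩, ⟨hsT, hy⟩, rfl⟩
    exact mopv_ne_zero _ (sphere_ne_zero hy)
  have hmemK : ∀ s ∈ T, ∀ x : S2, mopv (↑((E s)⁻¹)) (↑x : E3) ∈ K := fun s hs x =>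
    ⟨(s, ↑x), ⟨hs, x.2⟩, rfl⟩
  obtain ⟨C1, hC1⟩ := hKc.exists_bound_of_continuousOn (hreg.continuousOn.mono hKsub)
  obtain ⟨C0, hC0⟩ := (isCompact_sphere (0 : E3) 1).exists_bound_of_continuousOn
    (hreg.continuousOn.mono (fun x hx => sphere_ne_zero hx))
  obtain ⟨C2, hC2⟩ := hKc.exists_bound_of_continuousOn (hgradcont.mono hKsub)
  set G : ℝ := |C1| + |C0| with hGdef
  have hGnn : 0 ≤ G := by positivity
  have hgb : ∀ s ∈ T, ∀ x : S2, |h (mopv (↑((E s)⁻¹)) ↑x) - h ↑x| ≤ G := by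
    intro s hs x
    have h1 : |h (mopv (↑((E s)⁻¹)) ↑x)| ≤ |C1| :=
      le_trans (hC1 _ (hmemK s hs x)) (le_abs_self _)
    have h2 : |h ↑x| ≤ |C0| := le_trans (hC0 _ x.2) (le_abs_self _)
    calc |h (mopv (↑((E s)⁻¹)) ↑x) - h ↑x| ≤ |h (mopv (↑((E s)⁻¹)) ↑x)| + |h ↑x| :=
          abs_sub _ _
      _ ≤ G := by rw [hGdef]; linarith
  have hgradb : ∀ s ∈ T, ∀ x : S2, ‖gradient h (mopv (↑((E s)⁻¹)) ↑x)‖ ≤ |C2| := by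
    intro s hs x
    exact le_trans (hC2 _ (hmemK s hs x)) (le_abs_self _)
  -- entry bound for the inverse on T
  choose cN hcN using fun i j : Fin 3 =>
    (isCompact_Icc (a := t - 1) (b := t + 1)).exists_bound_of_continuousOn
      (hNcont i j).continuousOn
  set CN : ℝ := ∑ i : Fin 3, ∑ j : Fin 3, |cN i j| with hCNdef
  have hCNnn : 0 ≤ CN := Finset.sum_nonneg fun _ _ => Finset.sum_nonneg fun _ _ => abs_nonneg _
  have hCN : ∀ s ∈ T, ∀ i j : Fin 3, |((↑((E s)⁻¹) : M3)) i j| ≤ CN := by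
    intro s hs i j
    calc |((↑((E s)⁻¹) : M3)) i j| ≤ cN i j := by
          simpa [Real.norm_eq_abs] using hcN i j s hs
      _ ≤ |cN i j| := le_abs_self _
      _ ≤ ∑ j' : Fin 3, |cN i j'| :=
          Finset.single_le_sum (f := fun j' => |cN i j'|) (fun _ _ => abs_nonneg _)
            (Finset.mem_univ j)
      _ ≤ CN := Finset.single_le_sum (f := fun i' => ∑ j' : Fin 3, |cN i' j'|)
          (fun _ _ => Finset.sum_nonneg fun _ _ => abs_nonneg _) (Finset.mem_univ i)
  -- bound for the transposed-product coordinates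
  set P : ℝ := 3 * CN * |C2| with hPdef
  have hPnn : 0 ≤ P := by positivity
  have hmTb : ∀ s ∈ T, ∀ x : S2, ∀ l : Fin 3,
      |(mopv ((↑((E s)⁻¹) : M3)ᵀ) (gradient h (mopv (↑((E s)⁻¹)) ↑x))) l| ≤ P := by
    intro s hs x l
    rw [mopv_apply']
    calc |∑ i, ((↑((E s)⁻¹) : M3))ᵀ l i * (gradient h (mopv (↑((E s)⁻¹)) ↑x)) i|
        ≤ ∑ i, |((↑((E s)⁻¹) : M3))ᵀ l i * (gradient h (mopv (↑((E s)⁻¹)) ↑x)) i| :=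
          Finset.abs_sum_le_sum_abs _ _
      _ ≤ ∑ _i : Fin 3, CN * |C2| := by
          apply Finset.sum_le_sum
          intro i _
          rw [abs_mul, Matrix.transpose_apply]
          apply mul_le_mul (hCN s hs i l) ?_ (abs_nonneg _) hCNnn
          exact le_trans (coord_le_norm' _ i) (hgradb s hs x)
      _ = P := by simp [hPdef]; ring
  have hxb : ∀ (x : S2) (j : Fin 3), |(↑x : E3) j| ≤ 1 := by
    intro x j
    have := coord_le_norm' (↑x : E3) j
    rwa [mem_sphere_zero_iff_norm.mp x.2] at this
  -- bound on Δ over T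
  set CΔ : ℝ := k * (G * P * (σ Set.univ).toReal) with hCΔdef
  have hCΔnn : 0 ≤ CΔ := by positivity
  have hΔb : ∀ s ∈ T, ∀ i j : Fin 3, |Δ s i j| ≤ CΔ := by
    intro s hs i j
    rw [hΔ s i j, abs_mul, abs_of_pos hk]
    have h1 : ‖∫ x : S2, (h (mopv (↑((E s)⁻¹)) ↑x) - h ↑x) *
        ((mopv ((↑((E s)⁻¹) : M3)ᵀ) (gradient h (mopv (↑((E s)⁻¹)) ↑x))) i *
          (↑x : E3) j) ∂σ‖ ≤ G * P * (σ Set.univ).toReal := by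
      apply norm_integral_le_of_norm_le_const
      apply Filter.Eventually.of_forall
      intro x
      rw [Real.norm_eq_abs, abs_mul, abs_mul]
      have := mul_le_mul (hmTb s hs x i) (hxb x j) (abs_nonneg _) hPnn
      calc |h (mopv (↑((E s)⁻¹)) ↑x) - h ↑x| *
          (|(mopv ((↑((E s)⁻¹) : M3)ᵀ) (gradient h (mopv (↑((E s)⁻¹)) ↑x))) i| *
            |(↑x : E3) j|)
          ≤ G * (P * 1) := by
            apply mul_le_mul (hgb s hs x) ?_ (by positivity) hGnn
            exact mul_le_mul (hmTb s hs x i) (hxb x j) (abs_nonneg _) hPnn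
        _ = G * P := by ring
    rw [hCΔdef]
    have h2 := mul_le_mul_of_nonneg_left h1 (le_of_lt hk)
    simpa [Real.norm_eq_abs] using h2
  -- bound on the derivative integrand
  set B : ℝ := 2 * G * (abs C2 * (9 * (3 * CN * CΔ))) with hBdef
  have hFb : ∀ s ∈ Metric.ball t 1, ∀ x : S2,
      |2 * (h (mopv (↑((E s)⁻¹)) ↑x) - h ↑x) *
        ⟪gradient h (mopv (↑((E s)⁻¹)) ↑x), mopv (-((↑((E s)⁻¹) : M3) * Δ s)) ↑x⟫| ≤ B := by
    intro s hs x
    have hsT : s ∈ T := hball hs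
    have hMent : ∀ i j : Fin 3, |(-((↑((E s)⁻¹) : M3) * Δ s)) i j| ≤ 3 * CN * CΔ := by
      intro i j
      rw [Matrix.neg_apply, abs_neg, Matrix.mul_apply]
      calc |∑ l, ((↑((E s)⁻¹) : M3)) i l * Δ s l j|
          ≤ ∑ l, |((↑((E s)⁻¹) : M3)) i l * Δ s l j| := Finset.abs_sum_le_sum_abs _ _
        _ ≤ ∑ _l : Fin 3, CN * CΔ := by
            apply Finset.sum_le_sum
            intro l _
            rw [abs_mul]
            exact mul_le_mul (hCN s hsT i l) (hΔb s hsT l j) (abs_nonneg _) hCNnn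
        _ = 3 * CN * CΔ := by simp; ring
    have hvb : ‖mopv (-((↑((E s)⁻¹) : M3) * Δ s)) (↑x : E3)‖ ≤ 9 * (3 * CN * CΔ) := by
      calc ‖mopv (-((↑((E s)⁻¹) : M3) * Δ s)) (↑x : E3)‖
          ≤ ∑ i, |mopv (-((↑((E s)⁻¹) : M3) * Δ s)) (↑x : E3) i| := norm_le_sum_abs' _
        _ ≤ ∑ _i : Fin 3, 3 * (3 * CN * CΔ) := by
            apply Finset.sum_le_sum
            intro i _
            rw [mopv_apply']
            calc |∑ j, (-((↑((E s)⁻¹) : M3) * Δ s)) i j * (↑x : E3) j|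
                ≤ ∑ j, |(-((↑((E s)⁻¹) : M3) * Δ s)) i j * (↑x : E3) j| :=
                  Finset.abs_sum_le_sum_abs _ _
              _ ≤ ∑ _j : Fin 3, (3 * CN * CΔ) * 1 := by
                  apply Finset.sum_le_sum
                  intro j _
                  rw [abs_mul]
                  exact mul_le_mul (hMent i j) (hxb x j) (abs_nonneg _) (by positivity)
              _ = 3 * (3 * CN * CΔ) := by simp
        _ = 9 * (3 * CN * CΔ) := by simp; ring
    calc |2 * (h (mopv (↑((E s)⁻¹)) ↑x) - h ↑x) *
        ⟪gradient h (mopv (↑((E s)⁻¹)) ↑x), mopv (-((↑((E s)⁻¹) : M3) * Δ s)) ↑x⟫|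
        = 2 * |h (mopv (↑((E s)⁻¹)) ↑x) - h ↑x| *
          |⟪gradient h (mopv (↑((E s)⁻¹)) ↑x), mopv (-((↑((E s)⁻¹) : M3) * Δ s)) ↑x⟫| := by
          rw [abs_mul, abs_mul]; norm_num
      _ ≤ 2 * G * (|C2| * (9 * (3 * CN * CΔ))) := by
          apply mul_le_mul
          · exact mul_le_mul_of_nonneg_left (hgb s hsT x) (by norm_num)
          · calc |⟪gradient h (mopv (↑((E s)⁻¹)) ↑x),
                mopv (-((↑((E s)⁻¹) : M3) * Δ s)) ↑x⟫|
                ≤ ‖gradient h (mopv (↑((E s)⁻¹)) ↑x)‖ *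
                  ‖mopv (-((↑((E s)⁻¹) : M3) * Δ s)) (↑x : E3)‖ := abs_real_inner_le_norm _ _
              _ ≤ |C2| * (9 * (3 * CN * CΔ)) :=
                  mul_le_mul (hgradb s hsT x) hvb (norm_nonneg _) (abs_nonneg _)
          · exact abs_nonneg _
          · positivity
      _ = B := hBdef.symm
  -- dominated differentiation under the integral sign
  have main := hasDerivAt_integral_of_dominated_loc_of_deriv_le (μ := σ)
    (F := fun s (x : S2) => (h (mopv (↑((E s)⁻¹)) ↑x) - h ↑x) ^ 2)
    (F' := fun s (x : S2) => 2 * (h (mopv (↑((E s)⁻¹)) ↑x) - h ↑x) *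
      ⟪gradient h (mopv (↑((E s)⁻¹)) ↑x), mopv (-((↑((E s)⁻¹) : M3) * Δ s)) ↑x⟫)
    (x₀ := t) (bound := fun _ => B) (s := Metric.ball t 1) (Metric.ball_mem_nhds t one_pos)
    (Filter.Eventually.of_forall fun s =>
      (((hcont_h s).sub hcont_hx).pow 2).aestronglyMeasurable)
    (by
      apply Continuous.integrable_of_hasCompactSupport
      · exact ((hcont_h t).sub hcont_hx).pow 2
      · exact HasCompactSupport.of_compactSpace _)
    (by
      apply Continuous.aestronglyMeasurable
      apply Continuous.mul
      · exact (continuous_const.mul ((hcont_h t).sub hcont_hx))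
      · exact (hcont_grad t).inner ((mopv_cont' _).comp continuous_subtype_val))
    (Filter.Eventually.of_forall fun x s hs => by
      rw [Real.norm_eq_abs]; exact hFb s hs x)
    (integrable_const B)
    (Filter.Eventually.of_forall fun x s hs => hFd s x)
  -- identify the derivative value
  have hLeq : L = fun r => (1 / 2) * ∫ x : S2, (h (mopv (↑((E r)⁻¹)) ↑x) - h ↑x) ^ 2 ∂σ :=
    funext hL
  have hder : HasDerivAt L ((1 / 2) * ∫ x : S2,
      2 * (h (mopv (↑((E t)⁻¹)) ↑x) - h ↑x) *
        ⟪gradient h (mopv (↑((E t)⁻¹)) ↑x), mopv (-((↑((E t)⁻¹) : M3) * Δ t)) ↑x⟫ ∂σ) t := by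
    rw [hLeq]
    exact main.2.const_mul (1 / 2)
  -- compute the integral
  have hpt : ∀ x : S2, 2 * (h (mopv (↑((E t)⁻¹)) ↑x) - h ↑x) *
      ⟪gradient h (mopv (↑((E t)⁻¹)) ↑x), mopv (-((↑((E t)⁻¹) : M3) * Δ t)) ↑x⟫
      = ∑ l, ∑ j, (-2 * Δ t l j) * ((h (mopv (↑((E t)⁻¹)) ↑x) - h ↑x) *
        ((mopv ((↑((E t)⁻¹) : M3)ᵀ) (gradient h (mopv (↑((E t)⁻¹)) ↑x))) l *
          (↑x : E3) j)) := by
    intro x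
    rw [inner_formula']
    simp only [mopv_apply', Matrix.neg_apply, Matrix.mul_apply, Matrix.transpose_apply,
      Fin.sum_univ_three]
    ring
  have hIval : ∀ l j : Fin 3, (∫ x : S2, (h (mopv (↑((E t)⁻¹)) ↑x) - h ↑x) *
      ((mopv ((↑((E t)⁻¹) : M3)ᵀ) (gradient h (mopv (↑((E t)⁻¹)) ↑x))) l *
        (↑x : E3) j) ∂σ) = Δ t l j / k := by
    intro l j
    rw [hΔ t l j]
    field_simp
  have hIsum : (∫ x : S2, 2 * (h (mopv (↑((E t)⁻¹)) ↑x) - h ↑x) *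
      ⟪gradient h (mopv (↑((E t)⁻¹)) ↑x), mopv (-((↑((E t)⁻¹) : M3) * Δ t)) ↑x⟫ ∂σ)
      = ∑ l : Fin 3, ∑ j : Fin 3, (-2 * Δ t l j) * (Δ t l j / k) := by
    rw [integral_congr_ae (Filter.Eventually.of_forall hpt)]
    rw [integral_finset_sum _ (fun l _ => integrable_finset_sum _
      (fun j _ => ((hint l j).const_mul _)))]
    congr 1
    funext l
    rw [integral_finset_sum _ (fun j _ => (hint l j).const_mul _)]
    congr 1
    funext j
    rw [integral_const_mul, hIval l j]
  have hfrob : frobNorm (Δ t) ^ 2 = ∑ i : Fin 3, ∑ j : Fin 3, Δ t i j ^ 2 := by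
    rw [frobNorm, Real.sq_sqrt]
    exact Finset.sum_nonneg fun _ _ => Finset.sum_nonneg fun _ _ => sq_nonneg _
  have hval : -(1 / k) * frobNorm (Δ t) ^ 2 = (1 / 2) * ∫ x : S2,
      2 * (h (mopv (↑((E t)⁻¹)) ↑x) - h ↑x) *
        ⟪gradient h (mopv (↑((E t)⁻¹)) ↑x), mopv (-((↑((E t)⁻¹) : M3) * Δ t)) ↑x⟫ ∂σ := by
    rw [hIsum, hfrob]
    rw [Finset.mul_sum, Finset.mul_sum]
    apply Finset.sum_congr rfl
    intro l _
    rw [Finset.mul_sum, Finset.mul_sum]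
    apply Finset.sum_congr rfl
    intro j _
    field_simp
  constructor
  · rw [hval]
    exact hder
  · have h1 : 0 ≤ (1 / k) * frobNorm (Δ t) ^ 2 := by positivity
    linarith
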